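/- arXiv:2403.18574 — 2 statements merged into one kernel-verified Lean document; each statement's English description precedes it below -/
import Mathlib

section
/- Uniqueness of the descent map: let P' ⊆ P be a nonempty ∂-invariant set of partitions and let Q : P' → P satisfy |Q(P)| = |P| and Q(∂P) = Q(P) − 1 for all P ∈ P'. Then Q(P) = Des(P) for all P ∈ P'. -/
open scoped Classical

noncomputable section

/-- `f` is a frequency sequence: `f 0 = 0` and finite support. -/
def IsFreq (f : ℕ → ℕ) : Prop := f 0 = 0 ∧ (Function.support f).Finite

/-- size `|f| = ∑ i·f i`. -/
def fsize (f : ℕ → ℕ) : ℕ := ∑ᶠ n, n * f n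

/-- length `ℓ(f) = ∑ f i`. -/
def flen (f : ℕ → ℕ) : ℕ := ∑ᶠ n, f n

/-- the support `S(f)`. -/
def suppF (f : ℕ → ℕ) : Set ℕ := {i | 1 ≤ i ∧ f i ≠ 0}

/-- `[i,j]` is a spread of `f`: a maximal interval contained in the support. -/
def IsSpread (f : ℕ → ℕ) (i j : ℕ) : Prop :=
  1 ≤ i ∧ i ≤ j ∧ (∀ k, i ≤ k → k ≤ j → f k ≠ 0) ∧ (i = 1 ∨ f (i - 1) = 0) ∧ f (j + 1) = 0

/-- `L(f)`: every other element of each spread, starting from the left end. -/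
def Lset (f : ℕ → ℕ) : Set ℕ :=
  {q | ∃ i j, IsSpread f i j ∧ i ≤ q ∧ q ≤ j ∧ (q - i) % 2 = 0}

/-- `R(f)`: every other element of each spread, starting from the right end. -/
def Rset (f : ℕ → ℕ) : Set ℕ :=
  {q | ∃ i j, IsSpread f i j ∧ i ≤ q ∧ q ≤ j ∧ (j - q) % 2 = 0}

/-- the 2-measure, as the cardinality of `R(f)`. -/
def mu2 (f : ℕ → ℕ) : ℕ := (Rset f).ncard

/-- The Burge demotion operator `∂`. -/
def dB (f : ℕ → ℕ) : ℕ → ℕ := fun n =>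
  if n = 0 then 0
  else f n - (if n ∈ Rset f then 1 else 0) + (if n + 1 ∈ Rset f then 1 else 0)

/-- The promotion operator `α`. -/
def aB (f : ℕ → ℕ) : ℕ → ℕ := fun n =>
  if n = 0 then 0
  else f n - (if n ∈ Lset f then 1 else 0) + (if n - 1 ∈ Lset f then 1 else 0)

/-- the shift `(f₂, f₃, …)`; on partitions this is `P ↦ P - 1`. -/
def tailF (f : ℕ → ℕ) : ℕ → ℕ := fun n => if n = 0 then 0 else f (n + 1)

/-- The operator `β`: `β(f) = (f₁ + 1, α(f₂, f₃, …))`. -/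
def bB (f : ℕ → ℕ) : ℕ → ℕ := fun n =>
  if n = 0 then 0 else if n = 1 then f 1 + 1 else aB (tailF f) (n - 1)

/-- the zero sequence (empty partition). -/
def zeroF : ℕ → ℕ := fun _ => 0

/-- `k` minimal with `∂^[k] f = 0`. -/
def chainK (f : ℕ → ℕ) : ℕ :=
  if h : ∃ m, dB^[m] f = zeroF then Nat.find h else 0

/-- The Burge code of `f`, as a list of letters; `false` = `a`, `true` = `b`.
The `i`-th letter (0-indexed `i`) records whether `∂^[i] f ∈ B`, i.e. `1 ∈ R(∂^[i] f)`. -/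
def burgeCode (f : ℕ → ℕ) : List Bool :=
  (List.range (chainK f + 1)).map fun i => if 1 ∈ Rset (dB^[i] f) then true else false

/-- descent set of a word: 1-indexed positions `i` with `ωᵢ = b`, `ω_{i+1} = a`. -/
def descSet (w : List Bool) : Set ℕ :=
  {i | 1 ≤ i ∧ w[i - 1]? = some true ∧ w[i]? = some false}

/-- the descent set of (the Burge code of) a partition. -/
def DesSet (f : ℕ → ℕ) : Set ℕ := descSet (burgeCode f)

/-- `Des(P)` regarded as a partition, via its frequency sequence. -/
def desFreq (f : ℕ → ℕ) : ℕ → ℕ := fun i => if i ∈ DesSet f then 1 else 0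

/-- the 2-measure as the maximal size of a subset of the support without
consecutive pairs. -/
def twoMeasure (f : ℕ → ℕ) : ℕ :=
  sSup {n | ∃ T : Finset ℕ, (↑T : Set ℕ) ⊆ suppF f ∧ (∀ x ∈ T, x + 1 ∉ T) ∧ T.card = n}

/-- evaluation at `i`: `ν_i(f) = i f_i + (i+1) f_{i+1} + 2 ∑_{j>i+1} f_j`, with `ν₀ = ν₁`. -/
def nuI (f : ℕ → ℕ) (i : ℕ) : ℕ :=
  (max i 1) * f (max i 1) + (max i 1 + 1) * f (max i 1 + 1)
    + 2 * ∑ᶠ j ∈ {j : ℕ | max i 1 + 1 < j}, f j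

/-- annihilation at `i`: `ρ_i(f) = (f₁, …, f_{i-1}, f_{i+2}, f_{i+3}, …)`, with `ρ₀ = ρ₁`. -/
def rhoI (f : ℕ → ℕ) (i : ℕ) : ℕ → ℕ := fun n =>
  if n = 0 then 0 else if n < max i 1 then f n else f (n + 2)

/-- `i ≥ 1` is right admissible in `f`. -/
def RightAdm (f : ℕ → ℕ) (i : ℕ) : Prop :=
  1 ≤ i ∧ 0 < f i ∧ (0 < f (i + 1) ∨ (f (i - 1) = 0 ∧ f (i + 1) = 0))

/-- `i ≥ 0` is left admissible in `f`. -/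
def LeftAdm (f : ℕ → ℕ) (i : ℕ) : Prop :=
  0 < f (i + 1) ∧ (0 < f i ∨ (f i = 0 ∧ f (i + 2) = 0))

/-- `i` is a maximal index for `f`: `ν_i(f)` is nonzero and maximal. -/
def MaxIdx (f : ℕ → ℕ) (i : ℕ) : Prop :=
  nuI f i ≠ 0 ∧ ∀ j, nuI f j ≤ nuI f i

end


section Aux

variable {f : ℕ → ℕ}

lemma rset_one_le {q : ℕ} (h : q ∈ Rset f) : 1 ≤ q := by
  obtain ⟨i, j, hs, hiq, _, _⟩ := h
  exact le_trans hs.1 hiq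

lemma rset_ne_zero {q : ℕ} (h : q ∈ Rset f) : f q ≠ 0 := by
  obtain ⟨i, j, hs, hiq, hqj, _⟩ := h
  exact hs.2.2.1 q hiq hqj

/-- existence of the spread containing a support point -/
lemma mkSpread (hf : IsFreq f) {q : ℕ} (hq1 : 1 ≤ q) (hq : f q ≠ 0) :
    ∃ i j, IsSpread f i j ∧ i ≤ q ∧ q ≤ j := by
  classical
  have hex : ∃ m, q ≤ m ∧ f (m + 1) = 0 := by
    obtain ⟨N, hN⟩ := hf.2.bddAbove
    refine ⟨max q N, le_max_left _ _, ?_⟩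
    by_contra h0
    have := hN (Function.mem_support.2 h0)
    omega
  set j := Nat.find hex with hj
  obtain ⟨hqj, hj0⟩ := Nat.find_spec hex
  have hjmin : ∀ m, m < j → ¬(q ≤ m ∧ f (m+1) = 0) := fun m hm => Nat.find_min hex hm
  have hup : ∀ k, q ≤ k → k ≤ j → f k ≠ 0 := by
    intro k hk1 hk2
    rcases Nat.eq_or_lt_of_le hk1 with rfl | hlt
    · exact hq
    · have : ¬(q ≤ k - 1 ∧ f (k - 1 + 1) = 0) := hjmin (k-1) (by omega)
      have hk : k - 1 + 1 = k := by omega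
      rw [hk] at this
      intro h0; exact this ⟨by omega, h0⟩
  have hex2 : ∃ i, 1 ≤ i ∧ i ≤ q ∧ ∀ k, i ≤ k → k ≤ q → f k ≠ 0 := by
    exact ⟨q, hq1, le_refl _, fun k h1 h2 => by
      have : k = q := le_antisymm h2 h1
      rw [this]; exact hq⟩
  set i := Nat.find hex2 with hi
  obtain ⟨hi1, hiq, hdn⟩ := Nat.find_spec hex2
  have hileft : i = 1 ∨ f (i - 1) = 0 := by
    rcases Nat.eq_or_lt_of_le hi1 with h1 | h2
    · exact Or.inl h1.symm
    · right
      have hmin : ¬(1 ≤ i - 1 ∧ i - 1 ≤ q ∧ ∀ k, i - 1 ≤ k → k ≤ q → f k ≠ 0) :=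
        Nat.find_min hex2 (by omega)
      by_contra h0
      refine hmin ⟨by omega, by omega, fun k hk1 hk2 => ?_⟩
      rcases Nat.eq_or_lt_of_le hk1 with h3 | h4
      · rw [← h3]; exact h0
      · exact hdn k (by omega) hk2
  refine ⟨i, j, ⟨hi1, le_trans hiq hqj, fun k h1 h2 => ?_, hileft, hj0⟩, hiq, hqj⟩
  rcases le_or_gt k q with h3 | h4
  · exact hdn k h1 h3
  · exact hup k (le_of_lt h4) h2

/-- spreads are unique -/
lemma spread_unique {i j i' j' q : ℕ} (h : IsSpread f i j) (h' : IsSpread f i' j')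
    (h1 : i ≤ q) (h2 : q ≤ j) (h3 : i' ≤ q) (h4 : q ≤ j') : i = i' ∧ j = j' := by
  obtain ⟨hi1, hij, hsupp, hleft, hright⟩ := h
  obtain ⟨hi1', hij', hsupp', hleft', hright'⟩ := h'
  constructor
  · by_contra hne
    rcases Nat.lt_or_ge i i' with hlt | hge
    · have : f (i' - 1) ≠ 0 := hsupp (i'-1) (by omega) (by omega)
      rcases hleft' with he | he
      · omega
      · exact this he
    · have hlt : i' < i := by omega
      have : f (i - 1) ≠ 0 := hsupp' (i-1) (by omega) (by omega)
      rcases hleft with he | he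
      · omega
      · exact this he
  · by_contra hne
    rcases Nat.lt_or_ge j j' with hlt | hge
    · exact (hsupp' (j+1) (by omega) (by omega)) hright
    · exact (hsupp (j'+1) (by omega) (by omega)) hright'

/-- the recursive characterization of `Rset`, forward direction -/
lemma rchar_mp {q : ℕ} (h : q ∈ Rset f) :
    1 ≤ q ∧ f q ≠ 0 ∧ (f (q+1) = 0 ∨ q + 2 ∈ Rset f) := by
  obtain ⟨i, j, hs, hiq, hqj, hpar⟩ := h
  refine ⟨le_trans hs.1 hiq, hs.2.2.1 q hiq hqj, ?_⟩
  rcases Nat.eq_or_lt_of_le hqj with rfl | hlt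
  · exact Or.inl hs.2.2.2.2
  · right
    have : q + 2 ≤ j := by omega
    exact ⟨i, j, hs, by omega, this, by omega⟩

/-- the recursive characterization of `Rset`, backward direction -/
lemma rchar_mpr (hf : IsFreq f) {q : ℕ} (h1 : 1 ≤ q) (h2 : f q ≠ 0)
    (h3 : f (q+1) = 0 ∨ q + 2 ∈ Rset f) : q ∈ Rset f := by
  obtain ⟨i, j, hs, hiq, hqj⟩ := mkSpread hf h1 h2
  by_cases hq1 : f (q+1) = 0
  · have hjq : j = q := by
      by_contra hne
      exact (hs.2.2.1 (q+1) (by omega) (by omega)) hq1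
    exact ⟨i, j, hs, hiq, hqj, by omega⟩
  · rcases h3 with h3 | h3
    · exact absurd h3 hq1
    obtain ⟨i', j', hs', hiq', hqj', hpar'⟩ := h3
    have hile : i' ≤ q := by
      by_contra hgt
      have h2' : 2 ≤ i' := by omega
      rcases hs'.2.2.2.1 with he | he
      · omega
      · -- f (i'-1) = 0 with i' = q+1 or q+2
        rcases Nat.lt_or_ge i' (q+2) with hc | hc
        · -- i' = q+1, f q = 0
          have : i' = q + 1 := by omega
          rw [this] at he; simp at he; exact h2 he
        · have : i' = q + 2 := by omega
          rw [this] at he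
          have : f (q+1) = 0 := by simpa using he
          exact hq1 this
    exact ⟨i', j', hs', hile, by omega, by omega⟩

/-- elements of `Rset` are never adjacent -/
lemma rset_not_adjacent {q : ℕ} (h : q ∈ Rset f) (h' : q + 1 ∈ Rset f) : False := by
  obtain ⟨i, j, hs, hiq, hqj, hpar⟩ := h
  obtain ⟨i', j', hs', hiq', hqj', hpar'⟩ := h'
  have hj : q + 1 ≤ j := by
    by_contra hgt
    have : j = q := by omega
    exact (hs'.2.2.1 (q+1) hiq' hqj') (this ▸ hs.2.2.2.2)
  obtain ⟨he1, he2⟩ := spread_unique hs hs' (by omega) hj hiq' hqj'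
  omega

end Aux
section Core

variable {f : ℕ → ℕ}

lemma dB_apply {n : ℕ} (hn : n ≠ 0) :
    dB f n = f n - (if n ∈ Rset f then 1 else 0) + (if n + 1 ∈ Rset f then 1 else 0) := by
  simp [dB, hn]

lemma dB_zero : dB f 0 = 0 := by simp [dB]

lemma dB_isFreq (hf : IsFreq f) : IsFreq (dB f) := by
  refine ⟨dB_zero, ?_⟩
  obtain ⟨N, hN⟩ := hf.2.bddAbove
  have hbound : ∀ m, f m ≠ 0 → m ≤ N := fun m hm => hN (Function.mem_support.2 hm)
  apply (Set.finite_Iio (N + 1)).subset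
  intro m hm
  simp only [Function.mem_support] at hm
  simp only [Set.mem_Iio]
  by_contra hge
  have h1 : f m = 0 := by
    by_contra h; have := hbound m h; omega
  have h2 : m ∉ Rset f := fun h => rset_ne_zero h h1
  have h3 : m + 1 ∉ Rset f := fun h => rset_ne_zero h (by
    by_contra h'; have := hbound (m+1) h'; omega)
  rw [dB_apply (by omega), h1, if_neg h2, if_neg h3] at hm
  exact hm rfl

/-- key pointwise lemma Q: `q ∈ R(∂f)` and `q+1 ∉ R(f)` imply `q ∈ R(f)`. -/
lemma key_Q (hf : IsFreq f) {q : ℕ} (h1 : q ∈ Rset (dB f)) (h2 : q + 1 ∉ Rset f) :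
    q ∈ Rset f := by
  obtain ⟨N, hN⟩ := hf.2.bddAbove
  have hbound : ∀ m, f m ≠ 0 → m ≤ N := fun m hm => hN (Function.mem_support.2 hm)
  have hTb : ∀ m, N + 1 ≤ m → m ∉ Rset f := fun m hm h =>
    (by have := hbound m (rset_ne_zero h); omega)
  have hTb' : ∀ m, N + 1 ≤ m → m ∉ Rset (dB f) := by
    intro m hm h
    have hm0 : m ≠ 0 := by omega
    have := rset_ne_zero h
    rw [dB_apply hm0] at this
    have e1 : f m = 0 := by by_contra h'; have := hbound m h'; omega
    have e2 : m ∉ Rset f := fun h' => (by have := hbound m (rset_ne_zero h'); omega)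
    have e3 : m + 1 ∉ Rset f := hTb (m+1) (by omega)
    rw [e1, if_neg e2, if_neg e3] at this
    exact this rfl
  have main : ∀ d q, N + 1 ≤ q + d → q ∈ Rset (dB f) → q + 1 ∉ Rset f → q ∈ Rset f := by
    intro d
    induction d with
    | zero => intro q hq hq1 _; exact absurd hq1 (hTb' q (by omega))
    | succ d ih =>
      intro q hq hqT' hq1T
      by_cases hqN : N + 1 ≤ q
      · exact absurd hqT' (hTb' q hqN)
      obtain ⟨hq1, hgq, halt⟩ := rchar_mp hqT'
      by_cases hqT : q ∈ Rset f
      · exact hqT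
      have hfq : f q ≠ 0 := by
        rw [dB_apply (by omega), if_neg hqT, if_neg hq1T] at hgq
        simpa using hgq
      rcases halt with hc | hc
      · -- dB f (q+1) = 0 forces f (q+1) = 0
        rw [dB_apply (by omega), if_neg hq1T] at hc
        have : f (q+1) = 0 := by omega
        exact rchar_mpr hf hq1 hfq (Or.inl this)
      · by_cases hq3 : q + 3 ∈ Rset f
        · -- then f (q+1) = 0 (else q+1 ∈ Rset f, contradiction)
          have hfq1 : f (q+1) = 0 := by
            by_contra h0
            exact hq1T (rchar_mpr hf (by omega) h0 (Or.inr (by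
              have : q + 1 + 2 = q + 3 := by omega
              rw [this]; exact hq3)))
          exact rchar_mpr hf hq1 hfq (Or.inl hfq1)
        · have hq2T : q + 2 ∈ Rset f := ih (q+2) (by omega) hc (by
            have : q + 2 + 1 = q + 3 := by omega
            rw [this]; exact hq3)
          exact rchar_mpr hf hq1 hfq (Or.inr hq2T)
  exact main (N + 1) q (by omega) h1 h2

/-- key pointwise lemma P2: `q ∈ R(f) \ R(∂f)` with `q ≥ 2` implies `q-1 ∈ R(∂f)`. -/
lemma key_P2 (hf : IsFreq f) {q : ℕ} (h1 : q ∈ Rset f) (h2 : q ∉ Rset (dB f)) (h3 : 2 ≤ q) :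
    q - 1 ∈ Rset (dB f) := by
  have hf' : IsFreq (dB f) := dB_isFreq hf
  obtain ⟨N, hN⟩ := hf.2.bddAbove
  have hbound : ∀ m, f m ≠ 0 → m ≤ N := fun m hm => hN (Function.mem_support.2 hm)
  have hTb : ∀ m, N + 1 ≤ m → m ∉ Rset f := fun m hm h =>
    (by have := hbound m (rset_ne_zero h); omega)
  have main : ∀ d q, N + 1 ≤ q + d → q ∈ Rset f → q ∉ Rset (dB f) → 2 ≤ q →
      q - 1 ∈ Rset (dB f) := by
    intro d
    induction d with
    | zero => intro q hq hq1 _ _; exact absurd hq1 (hTb q (by omega))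
    | succ d ih =>
      intro q hq hqT hqT' hq2
      by_cases hqN : N + 1 ≤ q
      · exact absurd hqT (hTb q hqN)
      have hq1T : q + 1 ∉ Rset f := fun h => rset_not_adjacent hqT h
      have hqm1T : q - 1 ∉ Rset f := fun h => rset_not_adjacent h (by
        have : q - 1 + 1 = q := by omega
        rw [this]; exact hqT)
      have hgqm1 : dB f (q-1) = f (q-1) + 1 := by
        rw [dB_apply (by omega), if_neg hqm1T]
        have : q - 1 + 1 = q := by omega
        rw [this, if_pos hqT]
        omega
      have hgq : dB f q = f q - 1 := by
        rw [dB_apply (by omega), if_pos hqT, if_neg hq1T]; omega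
      refine rchar_mpr hf' (by omega) (by rw [hgqm1]; omega) ?_
      have e1 : q - 1 + 1 = q := by omega
      have e2 : q - 1 + 2 = q + 1 := by omega
      rw [e1, e2]
      by_cases hfq : f q = 1
      · exact Or.inl (by rw [hgq, hfq])
      · -- f q ≥ 2, so dB f q ≠ 0; since q ∉ R(∂f), get dB f (q+1) ≠ 0 and q+2 ∉ R(∂f)
        have hfq2 : 2 ≤ f q := by
          have := rset_ne_zero hqT; omega
        have hnot : ¬ (dB f (q+1) = 0 ∨ q + 2 ∈ Rset (dB f)) := by
          intro hc
          exact hqT' (rchar_mpr hf' (by omega) (by rw [hgq]; omega) hc)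
        push_neg at hnot
        obtain ⟨hg1, hg2⟩ := hnot
        obtain ⟨_, _, halt⟩ := rchar_mp hqT
        by_cases hq2T : q + 2 ∈ Rset f
        · exact Or.inr (by
            have := ih (q+2) (by omega) hq2T hg2 (by omega)
            have e : q + 2 - 1 = q + 1 := by omega
            rwa [e] at this)
        · rcases halt with hc | hc
          · exfalso
            apply hg1
            rw [dB_apply (by omega), hc, if_neg hq1T, if_neg hq2T]
          · exact absurd hc hq2T
  exact main (N + 1) q (by omega) h1 h2 h3

end Core
section Count

variable {f : ℕ → ℕ}

lemma rset_finite (hf : IsFreq f) : (Rset f).Finite :=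
  hf.2.subset (fun q hq => Function.mem_support.2 (rset_ne_zero hq))

/-- Lemma B : the cardinality of `R` drops by exactly the descent indicator under `∂`. -/
lemma mu2_dB (hf : IsFreq f) :
    (Rset (dB f)).ncard + (if 1 ∈ Rset f ∧ 1 ∉ Rset (dB f) then 1 else 0)
      = (Rset f).ncard := by
  classical
  have hf' : IsFreq (dB f) := dB_isFreq hf
  have hfinT : (Rset f).Finite := rset_finite hf
  set ψ : ℕ → ℕ := fun q => if q + 1 ∈ Rset f then q + 1 else q with hψ
  have hmaps : ∀ q ∈ Rset (dB f), ψ q ∈ Rset f := by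
    intro q hq
    by_cases hc : q + 1 ∈ Rset f
    · simp only [hψ, if_pos hc]; exact hc
    · simp only [hψ, if_neg hc]; exact key_Q hf hq hc
  have hinj : Set.InjOn ψ (Rset (dB f)) := by
    intro a ha b hb hab
    simp only [hψ] at hab
    by_cases h1 : a + 1 ∈ Rset f <;> by_cases h2 : b + 1 ∈ Rset f
    · rw [if_pos h1, if_pos h2] at hab; omega
    · rw [if_pos h1, if_neg h2] at hab
      rw [← hab] at hb
      exact absurd hb (fun h => rset_not_adjacent ha h)
    · rw [if_neg h1, if_pos h2] at hab
      rw [hab] at ha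
      exact absurd ha (fun h => rset_not_adjacent hb h)
    · rwa [if_neg h1, if_neg h2] at hab
  set D : Set ℕ := if 1 ∈ Rset f ∧ 1 ∉ Rset (dB f) then {1} else ∅ with hD
  have himg : ψ '' (Rset (dB f)) = Rset f \ D := by
    apply Set.Subset.antisymm
    · rintro _ ⟨q, hq, rfl⟩
      refine ⟨hmaps q hq, ?_⟩
      rw [hD]
      split
      · rename_i hind
        simp only [Set.mem_singleton_iff]
        intro h1
        simp only [hψ] at h1
        by_cases hc : q + 1 ∈ Rset f
        · rw [if_pos hc] at h1
          have := rset_one_le hq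
          omega
        · rw [if_neg hc] at h1
          rw [h1] at hq
          exact hind.2 hq
      · simp
    · rintro p ⟨hp, hpD⟩
      by_cases hp' : p ∈ Rset (dB f)
      · exact ⟨p, hp', by
          simp only [hψ]
          rw [if_neg (fun h => rset_not_adjacent hp h)]⟩
      · have hp2 : 2 ≤ p := by
          have h1p := rset_one_le hp
          rcases Nat.eq_or_lt_of_le h1p with h | h
          · exfalso
            rw [← h] at hp hp'
            apply hpD
            rw [hD, if_pos ⟨hp, hp'⟩, ← h]
            rfl
          · omega
        refine ⟨p - 1, key_P2 hf hp hp' hp2, ?_⟩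
        simp only [hψ]
        have e : p - 1 + 1 = p := by omega
        rw [e, if_pos hp]
  have hcard : (Rset (dB f)).ncard = (Rset f \ D).ncard := by
    rw [← himg, Set.ncard_image_of_injOn hinj]
  rw [hcard]
  by_cases hind : 1 ∈ Rset f ∧ 1 ∉ Rset (dB f)
  · rw [if_pos hind, hD, if_pos hind]
    exact Set.ncard_diff_singleton_add_one hind.1 hfinT
  · rw [if_neg hind, hD, if_neg hind]
    simp

end Count
section Sums

variable {f h : ℕ → ℕ}

lemma freq_bound (hf : IsFreq f) : ∃ N, 1 ≤ N ∧ ∀ m, N ≤ m → f m = 0 := by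
  obtain ⟨N, hN⟩ := hf.2.bddAbove
  refine ⟨N + 1, by omega, fun m hm => ?_⟩
  by_contra h0
  have := hN (Function.mem_support.2 h0)
  omega

lemma fsize_eq_sum {N : ℕ} (hz : ∀ m, N ≤ m → f m = 0) :
    fsize f = ∑ n ∈ Finset.range N, n * f n := by
  apply finsum_eq_sum_of_support_subset
  intro n hn
  simp only [Function.mem_support] at hn
  simp only [Finset.coe_range, Set.mem_Iio]
  by_contra hge
  rw [hz n (by omega)] at hn
  simp at hn

lemma flen_eq_sum {N : ℕ} (hz : ∀ m, N ≤ m → f m = 0) :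
    flen f = ∑ n ∈ Finset.range N, f n := by
  apply finsum_eq_sum_of_support_subset
  intro n hn
  simp only [Function.mem_support] at hn
  simp only [Finset.coe_range, Set.mem_Iio]
  by_contra hge
  exact hn (hz n (by omega))

/-- Lemma A : `∂` decreases the size by exactly `|R(f)|`. -/
lemma fsize_dB (hf : IsFreq f) : fsize (dB f) + (Rset f).ncard = fsize f := by
  classical
  obtain ⟨N, hN1, hz⟩ := freq_bound hf
  have hzdB : ∀ m, N ≤ m → dB f m = 0 := by
    intro m hm
    have hm1 : m ≠ 0 := by omega
    rw [dB_apply hm1, hz m hm,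
      if_neg (fun hc => rset_ne_zero hc (hz m hm)),
      if_neg (fun hc => rset_ne_zero hc (hz (m+1) (by omega)))]
  set Rfin : Finset ℕ := (Finset.range N).filter (· ∈ Rset f) with hRfin
  have hRco : (Rset f) = ↑Rfin := by
    ext q
    simp only [hRfin, Finset.coe_filter, Set.mem_setOf_eq, Finset.mem_range]
    constructor
    · intro hq
      refine ⟨?_, hq⟩
      by_contra hge
      exact rset_ne_zero hq (hz q (by omega))
    · exact fun hq => hq.2
  have hptw : ∀ n, n ≠ 0 → dB f n + (if n ∈ Rset f then 1 else 0)
      = f n + (if n + 1 ∈ Rset f then 1 else 0) := by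
    intro n hn
    rw [dB_apply hn]
    by_cases h1 : n ∈ Rset f
    · have := rset_ne_zero h1
      rw [if_pos h1]
      split <;> omega
    · rw [if_neg h1]
      split <;> omega
  have hsum : ∑ n ∈ Finset.range N, n * dB f n + ∑ n ∈ Finset.range N, n * (if n ∈ Rset f then 1 else 0)
      = ∑ n ∈ Finset.range N, n * f n + ∑ n ∈ Finset.range N, n * (if n + 1 ∈ Rset f then 1 else 0) := by
    rw [← Finset.sum_add_distrib, ← Finset.sum_add_distrib]
    apply Finset.sum_congr rfl
    intro n _
    rcases Nat.eq_zero_or_pos n with rfl | hn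
    · simp
    · rw [← Nat.mul_add, ← Nat.mul_add, hptw n (by omega)]
  have e1 : ∑ n ∈ Finset.range N, n * (if n ∈ Rset f then 1 else 0) = ∑ r ∈ Rfin, r := by
    rw [hRfin, Finset.sum_filter]
    apply Finset.sum_congr rfl
    intro n _
    split <;> simp
  have e2 : ∑ n ∈ Finset.range N, n * (if n + 1 ∈ Rset f then 1 else 0)
      = ∑ r ∈ Rfin, (r - 1) := by
    rw [show (∑ n ∈ Finset.range N, n * (if n + 1 ∈ Rset f then 1 else 0))
        = ∑ n ∈ (Finset.range N).filter (fun n => n + 1 ∈ Rset f), n by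
      rw [Finset.sum_filter]
      apply Finset.sum_congr rfl
      intro n _
      split <;> simp]
    apply Finset.sum_nbij' (i := fun n => n + 1) (j := fun r => r - 1)
    · intro a ha
      simp only [Finset.mem_filter, Finset.mem_range] at ha ⊢
      rw [hRfin]
      simp only [Finset.mem_filter, Finset.mem_range]
      refine ⟨?_, ha.2⟩
      by_contra hge
      exact rset_ne_zero ha.2 (hz (a+1) (by omega))
    · intro a ha
      rw [hRfin] at ha
      simp only [Finset.mem_filter, Finset.mem_range] at ha ⊢
      have h1 := rset_one_le ha.2
      have e : a - 1 + 1 = a := by omega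
      rw [e]
      exact ⟨by omega, ha.2⟩
    · intro a _; omega
    · intro a ha
      rw [hRfin] at ha
      simp only [Finset.mem_filter, Finset.mem_range] at ha
      have := rset_one_le ha.2
      omega
    · intro a _; rfl
  have e3 : ∑ r ∈ Rfin, r = ∑ r ∈ Rfin, (r - 1) + Rfin.card := by
    rw [Finset.card_eq_sum_ones, ← Finset.sum_add_distrib]
    apply Finset.sum_congr rfl
    intro r hr
    rw [hRfin] at hr
    simp only [Finset.mem_filter] at hr
    have := rset_one_le hr.2
    omega
  rw [fsize_eq_sum hz, fsize_eq_sum hzdB, hRco, Set.ncard_coe_finset]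
  omega

end Sums
section Tail

variable {h f : ℕ → ℕ}

lemma tailF_isFreq (hh : IsFreq h) : IsFreq (tailF h) := by
  refine ⟨rfl, ?_⟩
  obtain ⟨N, _, hz⟩ := freq_bound hh
  apply (Set.finite_Iio N).subset
  intro m hm
  simp only [Function.mem_support, tailF] at hm
  simp only [Set.mem_Iio]
  by_contra hge
  rcases Nat.eq_zero_or_pos m with rfl | hmp
  · simp at hm
  · rw [if_neg (by omega), hz (m+1) (by omega)] at hm
    exact hm rfl

lemma fsize_tailF (hh : IsFreq h) : fsize (tailF h) + flen h = fsize h := by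
  obtain ⟨N, hN1, hz⟩ := freq_bound hh
  have hzt : ∀ m, N ≤ m → tailF h m = 0 := by
    intro m hm
    simp only [tailF]
    rcases Nat.eq_zero_or_pos m with rfl | hmp
    · simp
    · rw [if_neg (by omega)]; exact hz (m+1) (by omega)
  have hz1 : ∀ m, N + 1 ≤ m → h m = 0 := fun m hm => hz m (by omega)
  rw [fsize_eq_sum hzt, flen_eq_sum hz1, fsize_eq_sum hz1]
  rw [Finset.sum_range_succ' (fun m => m * h m) N, Finset.sum_range_succ' (fun m => h m) N]
  have e : ∑ n ∈ Finset.range N, n * tailF h n = ∑ n ∈ Finset.range N, n * h (n + 1) := by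
    apply Finset.sum_congr rfl
    intro n _
    rcases Nat.eq_zero_or_pos n with rfl | hn
    · simp
    · simp only [tailF, if_neg (by omega : ¬ n = 0)]
  rw [e, hh.1]
  have : ∀ n, (n + 1) * h (n + 1) = n * h (n + 1) + h (n + 1) := by
    intro n; ring
  simp only [this]
  rw [Finset.sum_add_distrib]
  omega

lemma flen_tailF (hh : IsFreq h) : flen (tailF h) + h 1 = flen h := by
  obtain ⟨N, hN1, hz⟩ := freq_bound hh
  have hzt : ∀ m, N ≤ m → tailF h m = 0 := by
    intro m hm
    simp only [tailF]
    rcases Nat.eq_zero_or_pos m with rfl | hmp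
    · simp
    · rw [if_neg (by omega)]; exact hz (m+1) (by omega)
  have hzt1 : ∀ m, N + 1 ≤ m → tailF h m = 0 := fun m hm => hzt m (by omega)
  have hz2 : ∀ m, N + 2 ≤ m → h m = 0 := fun m hm => hz m (by omega)
  rw [flen_eq_sum hzt1, flen_eq_sum hz2]
  rw [Finset.sum_range_succ' (fun m => tailF h m) N,
    Finset.sum_range_succ' (fun m => h m) (N + 1),
    Finset.sum_range_succ' (fun m => h (m + 1)) N]
  have e : ∑ n ∈ Finset.range N, tailF h (n + 1) = ∑ n ∈ Finset.range N, h (n + 1 + 1) := by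
    apply Finset.sum_congr rfl
    intro n _
    simp only [tailF, if_neg (by omega : ¬ n + 1 = 0)]
  rw [e, hh.1]
  simp only [tailF, if_pos rfl]
  norm_num

lemma fsize_eq_zero (hh : IsFreq h) (h0 : fsize h = 0) : h = zeroF := by
  obtain ⟨N, hN1, hz⟩ := freq_bound hh
  rw [fsize_eq_sum hz] at h0
  funext n
  show h n = 0
  rcases Nat.eq_zero_or_pos n with rfl | hn
  · exact hh.1
  rcases Nat.lt_or_ge n N with hlt | hge
  · have := (Finset.sum_eq_zero_iff.1 h0) n (Finset.mem_range.2 hlt)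
    have hn' : n ≠ 0 := by omega
    exact (Nat.mul_eq_zero.1 this).resolve_left hn'
  · exact hz n hge

end Tail
section Chain

variable {f : ℕ → ℕ}

lemma zeroF_isFreq : IsFreq zeroF := by
  refine ⟨rfl, ?_⟩
  convert Set.finite_empty
  ext x
  simp [zeroF]

lemma rset_zeroF : Rset zeroF = ∅ := by
  ext q
  simp only [Set.mem_empty_iff_false, iff_false]
  intro hq
  exact rset_ne_zero hq rfl

lemma dB_zeroF : dB zeroF = zeroF := by
  funext n
  rcases Nat.eq_zero_or_pos n with rfl | hn
  · exact dB_zero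
  · rw [dB_apply (by omega), rset_zeroF]
    simp [zeroF]

lemma rset_nonempty (hf : IsFreq f) (hne : f ≠ zeroF) : (Rset f).Nonempty := by
  have : ∃ q, f q ≠ 0 := by
    by_contra h0
    push_neg at h0
    exact hne (funext h0)
  obtain ⟨q, hq⟩ := this
  have hq1 : 1 ≤ q := by
    rcases Nat.eq_zero_or_pos q with rfl | hp
    · exact absurd hf.1 hq
    · omega
  obtain ⟨i, j, hs, _, _⟩ := mkSpread hf hq1 hq
  exact ⟨j, i, j, hs, hs.2.1, le_refl _, by omega⟩

lemma dB_terminates (hf : IsFreq f) : ∃ m, dB^[m] f = zeroF := by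
  generalize hs : fsize f = s
  induction s using Nat.strong_induction_on generalizing f with
  | _ s ih =>
    by_cases hne : f = zeroF
    · exact ⟨0, hne⟩
    · have hpos : 0 < (Rset f).ncard :=
        (Set.ncard_pos (rset_finite hf)).2 (rset_nonempty hf hne)
      have hlt : fsize (dB f) < s := by
        have := fsize_dB hf
        omega
      obtain ⟨m, hm⟩ := ih (fsize (dB f)) (by omega) (dB_isFreq hf) rfl
      exact ⟨m + 1, by rw [Function.iterate_succ_apply, hm]⟩

lemma dB_iter_isFreq (hf : IsFreq f) (k : ℕ) : IsFreq (dB^[k] f) := by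
  induction k with
  | zero => exact hf
  | succ k ih => rw [Function.iterate_succ_apply']; exact dB_isFreq ih

lemma chainK_spec (hf : IsFreq f) : dB^[chainK f] f = zeroF := by
  rw [chainK, dif_pos (dB_terminates hf)]
  exact Nat.find_spec (dB_terminates hf)

lemma chainK_min (hf : IsFreq f) {m : ℕ} (hm : m < chainK f) : dB^[m] f ≠ zeroF := by
  rw [chainK, dif_pos (dB_terminates hf)] at hm
  exact Nat.find_min (dB_terminates hf) hm

lemma dB_iter_zero (hf : IsFreq f) {m : ℕ} (hm : chainK f ≤ m) : dB^[m] f = zeroF := by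
  have h1 : dB^[chainK f] f = zeroF := chainK_spec hf
  have : ∀ d, dB^[chainK f + d] f = zeroF := by
    intro d
    induction d with
    | zero => exact h1
    | succ d ih =>
      have : chainK f + (d + 1) = (chainK f + d) + 1 := by omega
      rw [this, Function.iterate_succ_apply', ih, dB_zeroF]
  have := this (m - chainK f)
  rwa [show chainK f + (m - chainK f) = m by omega] at this

lemma lt_chainK (hf : IsFreq f) {m : ℕ} (hm : dB^[m] f ≠ zeroF) : m < chainK f := by
  by_contra hge
  exact hm (dB_iter_zero hf (by omega))

/-- the descent-set characterization. -/
lemma mem_DesSet (hf : IsFreq f) {i : ℕ} (hi : 1 ≤ i) :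
    i ∈ DesSet f ↔ 1 ∈ Rset (dB^[i-1] f) ∧ 1 ∉ Rset (dB^[i] f) := by
  classical
  have hlen : (burgeCode f).length = chainK f + 1 := by
    simp [burgeCode]
  have hget : ∀ m, m ≤ chainK f →
      (burgeCode f)[m]? = some (if 1 ∈ Rset (dB^[m] f) then true else false) := by
    intro m hm
    rw [burgeCode, List.getElem?_map, List.getElem?_range (by omega)]
    rfl
  constructor
  · rintro ⟨-, h1, h2⟩
    have hi1 : i - 1 < chainK f + 1 := by
      by_contra hge
      rw [burgeCode, List.getElem?_map, List.getElem?_eq_none (by simpa using (by omega : chainK f + 1 ≤ i - 1))] at h1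
      simp at h1
    have hi2 : i < chainK f + 1 := by
      by_contra hge
      rw [burgeCode, List.getElem?_map, List.getElem?_eq_none (by simpa using (by omega : chainK f + 1 ≤ i))] at h2
      simp at h2
    rw [hget (i-1) (by omega)] at h1
    rw [hget i (by omega)] at h2
    constructor
    · by_contra hc
      rw [if_neg hc] at h1
      simp at h1
    · intro hc
      rw [if_pos hc] at h2
      simp at h2
  · rintro ⟨h1, h2⟩
    have hne : dB^[i-1] f ≠ zeroF := by
      intro h0
      rw [h0, rset_zeroF] at h1
      exact h1
    have hik : i - 1 < chainK f := lt_chainK hf hne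
    refine ⟨hi, ?_, ?_⟩
    · rw [hget (i-1) (by omega), if_pos h1]
    · rw [hget i (by omega), if_neg h2]

end Chain
theorem stmt13' (P' : Set (ℕ → ℕ)) (hne : P'.Nonempty) (hsub : ∀ f ∈ P', IsFreq f)
    (hinv : ∀ f ∈ P', dB f ∈ P')
    (Q : (ℕ → ℕ) → (ℕ → ℕ)) (hQfreq : ∀ f ∈ P', IsFreq (Q f))
    (hsize : ∀ f ∈ P', fsize (Q f) = fsize f)
    (hstep : ∀ f ∈ P', Q (dB f) = tailF (Q f)) :
    ∀ f ∈ P', Q f = desFreq f := by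
  classical
  -- the length of Q g equals |R(g)|
  have hflen : ∀ g ∈ P', flen (Q g) = (Rset g).ncard := by
    intro g hg
    have h1 : fsize (tailF (Q g)) + flen (Q g) = fsize (Q g) := fsize_tailF (hQfreq g hg)
    rw [← hstep g hg, hsize g hg, hsize (dB g) (hinv g hg)] at h1
    have h2 : fsize (dB g) + (Rset g).ncard = fsize g := fsize_dB (hsub g hg)
    omega
  -- the first entry of Q g is the descent indicator
  have hQ1 : ∀ g ∈ P', Q g 1 = if 1 ∈ Rset g ∧ 1 ∉ Rset (dB g) then 1 else 0 := by
    intro g hg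
    have h1 : flen (tailF (Q g)) + Q g 1 = flen (Q g) := flen_tailF (hQfreq g hg)
    rw [← hstep g hg, hflen (dB g) (hinv g hg), hflen g hg] at h1
    have h2 := mu2_dB (hsub g hg)
    omega
  -- iterate membership
  have hIter : ∀ g ∈ P', ∀ k, dB^[k] g ∈ P' := by
    intro g hg k
    induction k with
    | zero => exact hg
    | succ k ih => rw [Function.iterate_succ_apply']; exact hinv _ ih
  -- the shift property
  have hshift : ∀ i, ∀ g ∈ P', Q g (i + 1) = Q (dB^[i] g) 1 := by
    intro i
    induction i with
    | zero => intro g hg; simp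
    | succ i ih =>
      intro g hg
      have h1 : Q g (i + 2) = tailF (Q g) (i + 1) := by simp [tailF]
      rw [show i + 1 + 1 = i + 2 from rfl, h1, ← hstep g hg, ih (dB g) (hinv g hg),
        ← Function.iterate_succ_apply]
  intro f hf
  have hff : IsFreq f := hsub f hf
  funext n
  rcases Nat.eq_zero_or_pos n with rfl | hn
  · rw [(hQfreq f hf).1]
    show 0 = desFreq f 0
    rw [desFreq, if_neg (fun hc => by exact absurd hc.1 (by omega))]
  · have e1 : Q f n = Q (dB^[n-1] f) 1 := by
      have := hshift (n-1) f hf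
      rwa [show n - 1 + 1 = n by omega] at this
    have e2 := hQ1 (dB^[n-1] f) (hIter f hf (n-1))
    have e3 : dB (dB^[n-1] f) = dB^[n] f := by
      rw [← Function.iterate_succ_apply' dB (n-1) f]
      congr 1
      omega
    rw [e1, e2, e3]
    show _ = desFreq f n
    rw [desFreq]
    by_cases hc : 1 ∈ Rset (dB^[n-1] f) ∧ 1 ∉ Rset (dB^[n] f)
    · rw [if_pos hc, if_pos ((mem_DesSet hff (by omega)).2 hc)]
    · rw [if_neg hc, if_neg (fun hm => hc ((mem_DesSet hff (by omega)).1 hm))]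

/-- uniqueness of the descent map: if `P'` is a nonempty
`∂`-invariant set of partitions and `Q : P' → P` satisfies `|Q(P)| = |P|` and
`Q(∂P) = Q(P) - 1`, then `Q = Des` on `P'`.  (Partitions are represented by
their frequency sequences; `T - 1` corresponds to `tailF`.) -/
theorem stmt13 (P' : Set (ℕ → ℕ)) (hne : P'.Nonempty) (hsub : ∀ f ∈ P', IsFreq f)
    (hinv : ∀ f ∈ P', dB f ∈ P')
    (Q : (ℕ → ℕ) → (ℕ → ℕ)) (hQfreq : ∀ f ∈ P', IsFreq (Q f))
    (hsize : ∀ f ∈ P', fsize (Q f) = fsize f)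
    (hstep : ∀ f ∈ P', Q (dB f) = tailF (Q f)) :
    ∀ f ∈ P', Q f = desFreq f := by
  exact stmt13' P' hne hsub hinv Q hQfreq hsize hstep
end

section
/- If i ≥ 1 and i+1 ∈ R(f), then ν_i(∂f) = ν_i(f) − 1 and ρ_i(∂f) = ∂(ρ_i(f)). -/
open scoped Classical

lemma Rset_ne_zero {f : ℕ → ℕ} {q : ℕ} (h : q ∈ Rset f) : f q ≠ 0 := by
  obtain ⟨c, d, hs, h1, h2, -⟩ := h
  exact hs.2.2.1 q h1 h2

lemma spread_unique_s17 {f : ℕ → ℕ} {a b c d q : ℕ} (h1 : IsSpread f a b) (h2 : IsSpread f c d)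
    (haq : a ≤ q) (hqb : q ≤ b) (hcq : c ≤ q) (hqd : q ≤ d) : a = c ∧ b = d := by
  obtain ⟨ha1, hab, hnz1, hl1, hr1⟩ := h1
  obtain ⟨hc1, hcd, hnz2, hl2, hr2⟩ := h2
  constructor
  · by_contra hne
    rcases Nat.lt_or_ge a c with h | h
    · have hx : f (c - 1) ≠ 0 := hnz1 (c - 1) (by omega) (by omega)
      rcases hl2 with h' | h'
      · omega
      · exact hx h'
    · have hlt : c < a := by omega
      have hx : f (a - 1) ≠ 0 := hnz2 (a - 1) (by omega) (by omega)
      rcases hl1 with h' | h'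
      · omega
      · exact hx h'
  · by_contra hne
    rcases Nat.lt_or_ge b d with h | h
    · exact hnz2 (b + 1) (by omega) (by omega) hr1
    · exact hnz1 (d + 1) (by omega) (by omega) hr2

lemma spread_exists {f : ℕ → ℕ} {q : ℕ} (hq1 : 1 ≤ q) (hq : f q ≠ 0)
    (N : ℕ) (hN : ∀ m, N ≤ m → f m = 0) :
    ∃ c d, IsSpread f c d ∧ c ≤ q ∧ q ≤ d := by
  have hex1 : ∃ k, f (q + k + 1) = 0 := ⟨N, hN _ (by omega)⟩
  have hex2 : ∃ k, f (q - k) = 0 ∨ q - k = 0 := ⟨q, Or.inr (by omega)⟩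
  have hs1 := Nat.find_spec hex1
  have hs2 := Nat.find_spec hex2
  set k1 := Nat.find hex1 with hk1
  set k2 := Nat.find hex2 with hk2
  have hk2q : k2 ≤ q := Nat.find_le (Or.inr (by omega))
  have hk2pos : 1 ≤ k2 := by
    rcases Nat.eq_zero_or_pos k2 with h | h
    · have := Nat.find_spec hex2
      rw [← hk2, h] at this
      simp only [Nat.sub_zero] at this
      rcases this with h' | h'
      · exact absurd h' hq
      · omega
    · exact h
  refine ⟨q - k2 + 1, q + k1, ⟨by omega, by omega, ?_, ?_, ?_⟩, by omega, by omega⟩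
  · intro m h1 h2
    rcases le_or_gt m q with h | h
    · have hmin := Nat.find_min hex2 (show q - m < k2 by omega)
      push_neg at hmin
      have : q - (q - m) = m := by omega
      rw [this] at hmin
      exact hmin.1
    · have hmin := Nat.find_min hex1 (show m - q - 1 < k1 by omega)
      have : q + (m - q - 1) + 1 = m := by omega
      rw [this] at hmin
      exact hmin
  · rcases hs2 with h | h
    · right
      have : q - k2 + 1 - 1 = q - k2 := by omega
      rw [this]
      exact h
    · left; omega
  · exact hs1

lemma rho_lt {f : ℕ → ℕ} {i n : ℕ} (hi : 1 ≤ i) (h0 : n ≠ 0) (h : n < i) :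
    rhoI f i n = f n := by
  simp only [rhoI]
  rw [if_neg h0, if_pos (by omega)]

lemma rho_ge {f : ℕ → ℕ} {i n : ℕ} (hi : 1 ≤ i) (h : i ≤ n) :
    rhoI f i n = f (n + 2) := by
  simp only [rhoI]
  rw [if_neg (by omega), if_neg (by omega)]

section Key

variable {f : ℕ → ℕ} {i a b N : ℕ}

lemma not_mem_Rset_i (hi : 1 ≤ i)
    (hab : IsSpread f a b) (hai : a ≤ i + 1) (hib : i + 1 ≤ b)
    (hpar : (b - (i + 1)) % 2 = 0) : i ∉ Rset f := by
  rintro ⟨c, d, hs, hci, hid, hp2⟩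
  have hfi : f i ≠ 0 := hs.2.2.1 i hci hid
  have hale : a ≤ i := by
    by_contra h
    have hae : a = i + 1 := by omega
    rcases hab.2.2.2.1 with h' | h'
    · omega
    · rw [hae] at h'
      simp only [Nat.add_sub_cancel] at h'
      exact hfi h'
  obtain ⟨hac, hbd⟩ := spread_unique_s17 hab hs hale (by omega) hci hid
  omega

lemma not_mem_Rset_i2 (_hi : 1 ≤ i)
    (hab : IsSpread f a b) (hai : a ≤ i + 1) (hib : i + 1 ≤ b)
    (hpar : (b - (i + 1)) % 2 = 0) : i + 2 ∉ Rset f := by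
  rintro ⟨c, d, hs, hci, hid, hp2⟩
  have hfi : f (i + 2) ≠ 0 := hs.2.2.1 _ hci hid
  have hb2 : i + 2 ≤ b := by
    by_contra h
    exact hfi (by rw [show i + 2 = b + 1 by omega]; exact hab.2.2.2.2)
  obtain ⟨hac, hbd⟩ := spread_unique_s17 hab hs (by omega) hb2 hci hid
  omega

lemma rho_Rset_iff (hi : 1 ≤ i) (hN : ∀ m, N ≤ m → f m = 0)
    (hab : IsSpread f a b) (hai : a ≤ i + 1) (hib : i + 1 ≤ b)
    (hpar : (b - (i + 1)) % 2 = 0) (m : ℕ) (hm : 1 ≤ m) :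
    m ∈ Rset (rhoI f i) ↔ (if m < i then m ∈ Rset f else m + 2 ∈ Rset f) := by
  obtain ⟨ha1, habl, hnzab, hlab, hrab⟩ := hab
  have hfi1 : f (i + 1) ≠ 0 := hnzab _ hai hib
  have hacase : a ≤ i ∨ (a = i + 1 ∧ f i = 0) := by
    rcases Nat.lt_or_ge i a with h | h
    · right
      have hae : a = i + 1 := by omega
      refine ⟨hae, ?_⟩
      rcases hlab with h' | h'
      · omega
      · rw [hae] at h'
        simpa using h'
    · exact Or.inl h
  constructor
  · rintro ⟨c, d, ⟨hc1, hcdle, hnz, hleft, hright⟩, hcm, hmd, hpar2⟩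
    rcases Nat.lt_or_ge d i with hdi | hdi
    · -- d < i
      have hm' : m < i := by omega
      rw [if_pos hm']
      have hfc : ∀ k, c ≤ k → k ≤ d → f k ≠ 0 := fun k h1 h2 => by
        rw [← rho_lt (f := f) hi (by omega) (by omega)]; exact hnz k h1 h2
      have hleft' : c = 1 ∨ f (c - 1) = 0 := by
        rcases eq_or_ne c 1 with h | h
        · exact Or.inl h
        · right
          have h2 : rhoI f i (c - 1) = 0 := by
            rcases hleft with h' | h'
            · exact absurd h' h
            · exact h'
          rwa [rho_lt hi (by omega) (by omega)] at h2
      by_cases hd1 : d + 1 = i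
      · have hfi2 : f (i + 2) = 0 := by
          rw [show i + 2 = d + 1 + 2 by omega, ← rho_ge (f := f) hi (by omega)]
          exact hright
        rcases hacase with hale | ⟨hae, hfi0⟩
        · refine ⟨c, i + 1, ⟨hc1, by omega, ?_, hleft',
            by rw [show i + 1 + 1 = i + 2 by omega]; exact hfi2⟩, hcm, by omega, by omega⟩
          intro k h1 h2
          rcases Nat.lt_or_ge k i with h | h
          · exact hfc k h1 (by omega)
          · rcases Nat.eq_or_lt_of_le h with h' | h'
            · rw [← h']; exact hnzab i hale (by omega)
            · rw [show k = i + 1 by omega]; exact hfi1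
        · exact ⟨c, d, ⟨hc1, hcdle, hfc, hleft',
            by rw [hd1]; exact hfi0⟩, hcm, hmd, hpar2⟩
      · exact ⟨c, d, ⟨hc1, hcdle, hfc, hleft',
          by rw [← rho_lt (f := f) hi (by omega) (by omega)]; exact hright⟩, hcm, hmd, hpar2⟩
    · -- i ≤ d
      have hfd3 : f (d + 3) = 0 := by
        rw [show d + 3 = d + 1 + 2 by omega, ← rho_ge (f := f) hi (by omega)]
        exact hright
      have hfup : ∀ k, c ≤ k → i ≤ k → k ≤ d → f (k + 2) ≠ 0 := fun k h0 h1 h2 => by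
        rw [← rho_ge (f := f) hi h1]; exact hnz k h0 h2
      rcases Nat.lt_or_ge i c with hic | hci
      · -- i < c
        rw [if_neg (by omega)]
        have hgc : rhoI f i (c - 1) = 0 := by
          rcases hleft with h | h
          · omega
          · exact h
        have hfc1 : f (c + 1) = 0 := by
          rw [show c + 1 = c - 1 + 2 by omega, ← rho_ge (f := f) hi (by omega)]
          exact hgc
        refine ⟨c + 2, d + 2, ⟨by omega, by omega, ?_,
          Or.inr (by rw [show c + 2 - 1 = c + 1 by omega]; exact hfc1),
          by rw [show d + 2 + 1 = d + 3 by omega]; exact hfd3⟩, by omega, by omega, by omega⟩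
        intro k h1 h2
        rw [show k = k - 2 + 2 by omega]
        exact hfup (k - 2) (by omega) (by omega) (by omega)
      · -- c ≤ i
        have hleft' : c = 1 ∨ f (c - 1) = 0 := by
          rcases eq_or_ne c 1 with h | h
          · exact Or.inl h
          · right
            have h2 : rhoI f i (c - 1) = 0 := by
              rcases hleft with h' | h'
              · exact absurd h' h
              · exact h'
            rwa [rho_lt hi (by omega) (by omega)] at h2
        have hfdown : ∀ k, c ≤ k → k < i → f k ≠ 0 := fun k h1 h2 => by
          rw [← rho_lt (f := f) hi (by omega) h2]; exact hnz k h1 (by omega)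
        have hfe : ∀ k, i + 1 ≤ k → k ≤ d + 2 → f k ≠ 0 := by
          intro k h1 h2
          rcases eq_or_ne k (i + 1) with h | h
          · rw [h]; exact hfi1
          · rw [show k = k - 2 + 2 by omega]
            exact hfup (k - 2) (by omega) (by omega) (by omega)
        have hbd : b = d + 2 := by
          have h1 : b ≤ d + 2 := by
            by_contra h
            exact hnzab (d + 3) (by omega) (by omega) hfd3
          have h2 : d + 2 ≤ b := by
            by_contra h
            exact hfe (b + 1) (by omega) (by omega) hrab
          omega
        rcases hacase with hale | ⟨hae, hfi0⟩
        · have hsp : IsSpread f c (d + 2) := by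
            refine ⟨hc1, by omega, ?_, hleft',
              by rw [show d + 2 + 1 = d + 3 by omega]; exact hfd3⟩
            intro k h1 h2
            rcases Nat.lt_or_ge k i with h | h
            · exact hfdown k h1 h
            · rcases Nat.eq_or_lt_of_le h with h' | h'
              · rw [← h']; exact hnzab i hale (by omega)
              · exact hfe k (by omega) h2
          by_cases hmi : m < i
          · rw [if_pos hmi]
            exact ⟨c, d + 2, hsp, hcm, by omega, by omega⟩
          · rw [if_neg hmi]
            exact ⟨c, d + 2, hsp, by omega, by omega, by omega⟩
        · by_cases hmi : m < i
          · rw [if_pos hmi]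
            refine ⟨c, i - 1, ⟨hc1, by omega, fun k h1 h2 => hfdown k h1 (by omega), hleft',
              by rw [show i - 1 + 1 = i by omega]; exact hfi0⟩, hcm, by omega, by omega⟩
          · rw [if_neg hmi]
            exact ⟨a, b, ⟨ha1, habl, hnzab, hlab, hrab⟩, by omega, by omega, by omega⟩
  · intro h
    by_cases hmi : m < i
    · rw [if_pos hmi] at h
      obtain ⟨c, d, ⟨hc1, hcdle, hnz, hleft, hright⟩, hcm, hmd, hpar2⟩ := h
      rcases Nat.lt_or_ge d i with hdi | hdi
      · -- d < i
        have hleft' : c = 1 ∨ rhoI f i (c - 1) = 0 := by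
          rcases eq_or_ne c 1 with h' | h'
          · exact Or.inl h'
          · right
            rw [rho_lt hi (by omega) (by omega)]
            rcases hleft with h'' | h''
            · exact absurd h'' h'
            · exact h''
        have hgnz : ∀ k, c ≤ k → k ≤ d → rhoI f i k ≠ 0 := fun k h1 h2 => by
          rw [rho_lt hi (by omega) (by omega)]; exact hnz k h1 h2
        by_cases hd1 : d + 1 = i
        · have hfi0 : f i = 0 := by rw [← hd1]; exact hright
          rcases hacase with hale | ⟨hae, hfi0'⟩
          · exact absurd hfi0 (hnzab i hale (by omega))
          · by_cases hbe : b = i + 1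
            · refine ⟨c, i - 1, ⟨hc1, by omega,
                fun k h1 h2 => hgnz k h1 (by omega), hleft', ?_⟩, hcm, by omega, by omega⟩
              rw [show i - 1 + 1 = i by omega, rho_ge hi (le_refl i),
                show i + 2 = b + 1 by omega]
              exact hrab
            · have hb3 : i + 3 ≤ b := by omega
              refine ⟨c, b - 2, ⟨hc1, by omega, ?_, hleft', ?_⟩, hcm, by omega, by omega⟩
              · intro k h1 h2
                rcases Nat.lt_or_ge k i with h' | h'
                · rw [rho_lt hi (by omega) h']
                  exact hnz k h1 (by omega)
                · rw [rho_ge hi h']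
                  exact hnzab (k + 2) (by omega) (by omega)
              · rw [show b - 2 + 1 = b - 1 by omega, rho_ge hi (by omega),
                  show b - 1 + 2 = b + 1 by omega]
                exact hrab
        · refine ⟨c, d, ⟨hc1, hcdle, hgnz, hleft', ?_⟩, hcm, hmd, hpar2⟩
          rw [rho_lt hi (by omega) (by omega)]
          exact hright
      · -- i ≤ d
        have hfi0 : f i ≠ 0 := hnz i (by omega) hdi
        have hale : a ≤ i := by
          rcases hacase with h' | ⟨h1', h2'⟩
          · exact h'
          · exact absurd h2' hfi0
        obtain ⟨hac, hbd2⟩ := spread_unique_s17 ⟨ha1, habl, hnzab, hlab, hrab⟩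
          ⟨hc1, hcdle, hnz, hleft, hright⟩ hale (by omega) (by omega) hdi
        refine ⟨a, b - 2, ⟨ha1, by omega, ?_, ?_, ?_⟩, by omega, by omega, by omega⟩
        · intro k h1 h2
          rcases Nat.lt_or_ge k i with h' | h'
          · rw [rho_lt hi (by omega) h']
            exact hnzab k h1 (by omega)
          · rw [rho_ge hi h']
            exact hnzab (k + 2) (by omega) (by omega)
        · rcases eq_or_ne a 1 with h' | h'
          · exact Or.inl h'
          · right
            rw [rho_lt hi (by omega) (by omega)]
            rcases hlab with h'' | h''
            · exact absurd h'' h'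
            · exact h''
        · rw [show b - 2 + 1 = b - 1 by omega, rho_ge hi (by omega),
            show b - 1 + 2 = b + 1 by omega]
          exact hrab
    · rw [if_neg hmi] at h
      obtain ⟨c, d, ⟨hc1, hcdle, hnz, hleft, hright⟩, hcm, hmd, hpar2⟩ := h
      rcases Nat.lt_or_ge (i + 1) c with hic | hci
      · -- i + 2 ≤ c
        have hfc1 : f (c - 1) = 0 := by
          rcases hleft with h' | h'
          · omega
          · exact h'
        have hc3 : i + 3 ≤ c := by
          by_contra h'
          have : c - 1 = i + 1 := by omega
          rw [this] at hfc1
          exact hfi1 hfc1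
        refine ⟨c - 2, d - 2, ⟨by omega, by omega, ?_, ?_, ?_⟩, by omega, by omega, by omega⟩
        · intro k h1 h2
          rw [rho_ge hi (by omega)]
          exact hnz (k + 2) (by omega) (by omega)
        · right
          rw [rho_ge hi (by omega), show c - 2 - 1 + 2 = c - 1 by omega]
          exact hfc1
        · rw [rho_ge hi (by omega), show d - 2 + 1 + 2 = d + 1 by omega]
          exact hright
      · -- c ≤ i + 1
        obtain ⟨hac, hbd2⟩ := spread_unique_s17 ⟨ha1, habl, hnzab, hlab, hrab⟩
          ⟨hc1, hcdle, hnz, hleft, hright⟩ hai hib hci (by omega)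
        rcases hacase with hale | ⟨hae, hfi0⟩
        · refine ⟨a, b - 2, ⟨ha1, by omega, ?_, ?_, ?_⟩, by omega, by omega, by omega⟩
          · intro k h1 h2
            rcases Nat.lt_or_ge k i with h' | h'
            · rw [rho_lt hi (by omega) h']
              exact hnzab k h1 (by omega)
            · rw [rho_ge hi h']
              exact hnzab (k + 2) (by omega) (by omega)
          · rcases eq_or_ne a 1 with h' | h'
            · exact Or.inl h'
            · right
              rw [rho_lt hi (by omega) (by omega)]
              rcases hlab with h'' | h''
              · exact absurd h'' h'
              · exact h''
          · rw [show b - 2 + 1 = b - 1 by omega, rho_ge hi (by omega),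
              show b - 1 + 2 = b + 1 by omega]
            exact hrab
        · by_cases hmerge : i = 1 ∨ f (i - 1) = 0
          · refine ⟨i, b - 2, ⟨hi, by omega, ?_, ?_, ?_⟩, by omega, by omega, by omega⟩
            · intro k h1 h2
              rw [rho_ge hi (by omega)]
              exact hnzab (k + 2) (by omega) (by omega)
            · rcases hmerge with h' | h'
              · exact Or.inl h'
              · rcases eq_or_ne i 1 with h1' | h1'
                · exact Or.inl h1'
                · right
                  rw [rho_lt hi (by omega) (by omega)]
                  exact h'
            · rw [show b - 2 + 1 = b - 1 by omega, rho_ge hi (by omega),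
                show b - 1 + 2 = b + 1 by omega]
              exact hrab
          · push_neg at hmerge
            obtain ⟨hi2, hfi1ne⟩ := hmerge
            obtain ⟨c', d', hsp', hc'q, hqd'⟩ :=
              spread_exists (show 1 ≤ i - 1 by omega) hfi1ne N hN
            have hd'le : d' ≤ i - 1 := by
              by_contra h'
              exact hsp'.2.2.1 i (by omega) (by omega) hfi0
            obtain ⟨hc'1, hc'd', hnz', hleft', hright'⟩ := hsp'
            refine ⟨c', b - 2, ⟨hc'1, by omega, ?_, ?_, ?_⟩, by omega, by omega, by omega⟩
            · intro k h1 h2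
              rcases Nat.lt_or_ge k i with h' | h'
              · rw [rho_lt hi (by omega) h']
                exact hnz' k h1 (by omega)
              · rw [rho_ge hi h']
                exact hnzab (k + 2) (by omega) (by omega)
            · rcases eq_or_ne c' 1 with h' | h'
              · exact Or.inl h'
              · right
                rw [rho_lt hi (by omega) (by omega)]
                rcases hleft' with h'' | h''
                · exact absurd h'' h'
                · exact h''
            · rw [show b - 2 + 1 = b - 1 by omega, rho_ge hi (by omega),
                show b - 1 + 2 = b + 1 by omega]
              exact hrab

end Key


lemma sum_shift (u : ℕ → ℕ) (k : ℕ) (h0 : u 0 = 0) (hk : u k = 0) :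
    ∑ j ∈ Finset.range k, u (j + 1) = ∑ j ∈ Finset.range k, u j := by
  have h := Finset.sum_range_succ' u k
  rw [Finset.sum_range_succ, h0, hk] at h
  omega

/-- if `i ≥ 1` and `i+1 ∈ R(f)`, then `ν_i(∂f) = ν_i(f) - 1` and
`ρ_i(∂f) = ∂(ρ_i(f))`. -/
theorem stmt17 (f : ℕ → ℕ) (hf : IsFreq f) (i : ℕ) (hi : 1 ≤ i)
    (hR : i + 1 ∈ Rset f) :
    nuI (dB f) i = nuI f i - 1 ∧ rhoI (dB f) i = dB (rhoI f i) := by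
  obtain ⟨hf0, hfin⟩ := hf
  obtain ⟨M, hM⟩ := hfin.bddAbove
  have hN : ∀ m, M + 1 ≤ m → f m = 0 := by
    intro m h
    by_contra hc
    have := hM (Function.mem_support.mpr hc)
    omega
  obtain ⟨a, b, hab, hai, hib, hpar⟩ := id hR
  have hfi1 : f (i + 1) ≠ 0 := hab.2.2.1 _ hai hib
  have hS0 : i ∉ Rset f := not_mem_Rset_i hi hab hai hib hpar
  have hS1 : i + 2 ∉ Rset f := not_mem_Rset_i2 hi hab hai hib hpar
  have hclaim : ∀ m, 1 ≤ m →
      (m ∈ Rset (rhoI f i) ↔ if m < i then m ∈ Rset f else m + 2 ∈ Rset f) :=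
    fun m hm => rho_Rset_iff hi hN hab hai hib hpar m hm
  constructor
  · have hmax : max i 1 = i := by omega
    have hdi : dB f i = f i + 1 := by
      simp only [dB]
      rw [if_neg (by omega : ¬ i = 0), if_neg hS0, if_pos hR]
      omega
    have hdi1 : dB f (i + 1) = f (i + 1) - 1 := by
      simp only [dB]
      rw [if_neg (by omega : ¬ i + 1 = 0), if_pos hR, if_neg hS1]
      omega
    have hsum : ∑ᶠ j ∈ {j : ℕ | i + 1 < j}, dB f j = ∑ᶠ j ∈ {j : ℕ | i + 1 < j}, f j := by
      have hTf : {j : ℕ | i + 1 < j} ∩ Function.support f ⊆ ↑(Finset.Ico (i + 2) (M + 2)) := by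
        rintro j ⟨h1, h2⟩
        simp only [Set.mem_setOf_eq] at h1
        simp only [Function.mem_support] at h2
        have := hM (Function.mem_support.mpr h2)
        simp only [Finset.coe_Ico, Set.mem_Ico]
        omega
      have hTdb : {j : ℕ | i + 1 < j} ∩ Function.support (dB f)
          ⊆ ↑(Finset.Ico (i + 2) (M + 2)) := by
        rintro j ⟨h1, h2⟩
        simp only [Set.mem_setOf_eq] at h1
        simp only [Function.mem_support] at h2
        have hj : f j ≠ 0 ∨ j + 1 ∈ Rset f := by
          by_contra hcon
          push_neg at hcon
          obtain ⟨hc1, hc2⟩ := hcon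
          have : dB f j = 0 := by
            simp only [dB]
            rw [if_neg (by omega : ¬ j = 0), if_neg (fun h => Rset_ne_zero h hc1),
              if_neg hc2, hc1]
          exact h2 this
        simp only [Finset.coe_Ico, Set.mem_Ico]
        rcases hj with h | h
        · have := hM (Function.mem_support.mpr h)
          omega
        · have := hM (Function.mem_support.mpr (Rset_ne_zero h))
          omega
      rw [finsum_mem_eq_sum_of_subset _ hTdb (by
            intro j hj
            simp only [Finset.coe_Ico, Set.mem_Ico] at hj
            simp only [Set.mem_setOf_eq]
            omega),
          finsum_mem_eq_sum_of_subset _ hTf (by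
            intro j hj
            simp only [Finset.coe_Ico, Set.mem_Ico] at hj
            simp only [Set.mem_setOf_eq]
            omega)]
      have key : ∀ j ∈ Finset.Ico (i + 2) (M + 2),
          dB f j + (if j ∈ Rset f then 1 else 0)
            = f j + (if j + 1 ∈ Rset f then 1 else 0) := by
        intro j hj
        simp only [Finset.mem_Ico] at hj
        simp only [dB]
        rw [if_neg (by omega : ¬ j = 0)]
        by_cases h : j ∈ Rset f
        · have hfj := Rset_ne_zero h
          rw [if_pos h]
          by_cases h' : j + 1 ∈ Rset f
          · rw [if_pos h']; omega
          · rw [if_neg h']; omega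
        · rw [if_neg h]
          by_cases h' : j + 1 ∈ Rset f
          · rw [if_pos h']; omega
          · rw [if_neg h']; omega
      have hsum2 : (∑ j ∈ Finset.Ico (i + 2) (M + 2), dB f j)
            + ∑ j ∈ Finset.Ico (i + 2) (M + 2), (if j ∈ Rset f then 1 else 0)
          = (∑ j ∈ Finset.Ico (i + 2) (M + 2), f j)
            + ∑ j ∈ Finset.Ico (i + 2) (M + 2), (if j + 1 ∈ Rset f then 1 else 0) := by
        rw [← Finset.sum_add_distrib, ← Finset.sum_add_distrib]
        exact Finset.sum_congr rfl key
      have hshift : ∑ j ∈ Finset.Ico (i + 2) (M + 2), (if j + 1 ∈ Rset f then (1:ℕ) else 0)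
          = ∑ j ∈ Finset.Ico (i + 2) (M + 2), (if j ∈ Rset f then (1:ℕ) else 0) := by
        rw [Finset.sum_Ico_eq_sum_range, Finset.sum_Ico_eq_sum_range]
        have hu0 : (if i + 2 + 0 ∈ Rset f then (1:ℕ) else 0) = 0 :=
          if_neg (by simpa using hS1)
        have huk : (if i + 2 + (M + 2 - (i + 2)) ∈ Rset f then (1:ℕ) else 0) = 0 := by
          by_cases h : M + 2 - (i + 2) = 0
          · rw [h]
            exact if_neg (by simpa using hS1)
          · refine if_neg fun hmem => ?_
            have hle := hM (Function.mem_support.mpr (Rset_ne_zero hmem))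
            omega
        have hshift0 := sum_shift (fun j => if i + 2 + j ∈ Rset f then (1:ℕ) else 0)
          (M + 2 - (i + 2)) hu0 huk
        rw [← hshift0]
        exact Finset.sum_congr rfl fun j _ => by
          rw [show i + 2 + j + 1 = i + 2 + (j + 1) by omega]
      omega
    simp only [nuI, hmax]
    rw [hdi, hdi1, hsum]
    obtain ⟨F, hF⟩ : ∃ F, f (i + 1) = F + 1 := ⟨f (i + 1) - 1, by omega⟩
    rw [hF]
    set C := ∑ᶠ j ∈ {j : ℕ | i + 1 < j}, f j with hC
    rw [show F + 1 - 1 = F by omega]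
    rw [show i * f i + (i + 1) * (F + 1) + 2 * C
        = (i * (f i + 1) + (i + 1) * F + 2 * C) + 1 from by ring]
    simp
  · funext n
    rcases eq_or_ne n 0 with hn0 | hn0
    · subst hn0
      simp [rhoI, dB]
    by_cases hni : n < i
    · rw [rho_lt hi hn0 hni]
      simp only [dB]
      rw [if_neg hn0, if_neg hn0, rho_lt hi hn0 hni]
      have h1 := hclaim n (by omega)
      rw [if_pos hni] at h1
      by_cases hn1 : n + 1 < i
      · have h2 := hclaim (n + 1) (by omega)
        rw [if_pos hn1] at h2
        rw [if_congr h1 rfl rfl, if_congr h2 rfl rfl]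
      · have hn1' : n + 1 = i := by omega
        have h2 := hclaim (n + 1) (by omega)
        rw [if_neg hn1] at h2
        have hA : n + 1 ∉ Rset (rhoI f i) := fun h => hS1 (by
          rw [show i + 2 = n + 1 + 2 by omega]
          exact h2.mp h)
        have hB : n + 1 ∉ Rset f := by rw [hn1']; exact hS0
        rw [if_congr h1 rfl rfl, if_neg hA, if_neg hB]
    · have hin : i ≤ n := by omega
      rw [rho_ge hi hin]
      simp only [dB]
      rw [if_neg (by omega : ¬ n + 2 = 0), if_neg hn0, rho_ge hi hin]
      have h1 := hclaim n (by omega)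
      rw [if_neg hni] at h1
      have h2 := hclaim (n + 1) (by omega)
      rw [if_neg (by omega : ¬ n + 1 < i)] at h2
      rw [if_congr h1 rfl rfl, if_congr h2 rfl rfl, show n + 1 + 2 = n + 2 + 1 by omega]
end
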